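/- Let R be a commutative local ring with maximal ideal m, let n, r ≥ 1 be integers, and let β : Fin n → Fin r be a monotone function (assigning each index to a block). Define P(R) to be the set of invertible n×n matrices q over R with q i j = 0 whenever β(i) > β(j) (invertible block upper triangular matrices), and define N to be the set of n×n matrices u over R with u i i = 1 for all i, u i j = 0 whenever i ≠ j and β(i) ≤ β(j), and u i j ∈ m whenever β(i) > β(j) (block lower triangular unipotent matrices congruent to the identity modulo m); note every element of N is invertible. Then every g ∈ GL_n(R) satisfying g i j ∈ m for all pairs (i,j) with β(i) > β(j) admits a factorization g = u·q with u ∈ N and q ∈ P(R), and this factorization is unique. -/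
import Mathlib

open Matrix Finset IsLocalRing

section StrictLower

variable {R : Type*} [CommRing R] {n r : ℕ} {β : Fin n → Fin r}

lemma iwahoriAux_sl_mul {x y : Matrix (Fin n) (Fin n) R}
    (hx : ∀ i j, ¬ β j < β i → x i j = 0) (hy : ∀ i j, ¬ β j < β i → y i j = 0) :
    ∀ i j, ¬ β j < β i → (x * y) i j = 0 := by
  intro i j h
  rw [Matrix.mul_apply]
  refine Finset.sum_eq_zero fun k _ => ?_
  by_cases hk : β k < β i
  · rw [hy k j (fun hc => h (hc.trans hk)), mul_zero]
  · rw [hx i k hk, zero_mul]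

lemma iwahoriAux_sl_pow (hβ : Monotone β) {x : Matrix (Fin n) (Fin n) R}
    (hx : ∀ i j, ¬ β j < β i → x i j = 0) :
    ∀ (k : ℕ) (i j : Fin n), (i : ℕ) < (j : ℕ) + k → (x ^ k) i j = 0 := by
  intro k
  induction k with
  | zero =>
    intro i j hij
    rw [pow_zero]
    exact Matrix.one_apply_ne (by intro h; subst h; omega)
  | succ k ih =>
    intro i j hij
    rw [pow_succ, Matrix.mul_apply]
    refine Finset.sum_eq_zero fun l _ => ?_
    by_cases hl : (i : ℕ) < (l : ℕ) + k
    · rw [ih i l hl, zero_mul]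
    · have hz : ¬ β j < β l := by
        intro hc
        have hjl : (j : ℕ) < (l : ℕ) := by
          by_contra h'
          push_neg at h'
          exact absurd (hβ (Fin.le_def.mpr h')) hc.not_ge
        omega
      rw [hx l j hz, mul_zero]

lemma iwahoriAux_unip_inv (hβ : Monotone β) {x : Matrix (Fin n) (Fin n) R}
    (hx : ∀ i j, ¬ β j < β i → x i j = 0) :
    ∃ y : Matrix (Fin n) (Fin n) R, (∀ i j, ¬ β j < β i → y i j = 0) ∧
      (1 + x) * (1 + y) = 1 ∧ (1 + y) * (1 + x) = 1 := by
  have hnx : ∀ i j, ¬ β j < β i → (-x) i j = 0 := fun i j h => by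
    simp [hx i j h]
  have hnil : (-x) ^ (n + 1) = 0 := by
    ext i j
    rw [iwahoriAux_sl_pow hβ hnx (n + 1) i j (by have := i.isLt; omega)]
    simp
  set y := ∑ k ∈ Finset.range n, (-x) ^ (k + 1) with hy
  have h1y : 1 + y = ∑ k ∈ Finset.range (n + 1), (-x) ^ k := by
    rw [Finset.sum_range_succ', pow_zero]
    abel
  have hpow : ∀ k, ∀ i j, ¬ β j < β i → ((-x) ^ (k + 1)) i j = 0 := by
    intro k
    induction k with
    | zero => simpa using hnx
    | succ k ih =>
      intro i j h
      rw [pow_succ]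
      exact iwahoriAux_sl_mul ih hnx i j h
  refine ⟨y, ?_, ?_, ?_⟩
  · intro i j h
    rw [hy, Matrix.sum_apply]
    exact Finset.sum_eq_zero fun k _ => hpow k i j h
  · rw [h1y]
    have h1 := mul_geom_sum (-x) (n + 1)
    rw [hnil, zero_sub] at h1
    have h2 : (1 + x) = -((-x) - 1) := by abel
    rw [h2, neg_mul, h1, neg_neg]
  · rw [h1y]
    have h1 := geom_sum_mul (-x) (n + 1)
    rw [hnil, zero_sub] at h1
    have h2 : (1 + x) = -((-x) - 1) := by abel
    rw [h2, mul_neg, h1, neg_neg]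

lemma iwahori_unique (hβ : Monotone β)
    {u₁ q₁ u₂ q₂ : Matrix (Fin n) (Fin n) R}
    (hd₁ : ∀ i, u₁ i i = 1) (hz₁ : ∀ i j, i ≠ j → β i ≤ β j → u₁ i j = 0)
    (hq₁ : IsUnit q₁) (ht₁ : ∀ i j, β j < β i → q₁ i j = 0)
    (hd₂ : ∀ i, u₂ i i = 1) (hz₂ : ∀ i j, i ≠ j → β i ≤ β j → u₂ i j = 0)
    (hq₂ : IsUnit q₂) (ht₂ : ∀ i j, β j < β i → q₂ i j = 0)
    (heq : u₁ * q₁ = u₂ * q₂) : (u₁, q₁) = (u₂, q₂) := by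
  have hsl : ∀ (u : Matrix (Fin n) (Fin n) R), (∀ i, u i i = 1) →
      (∀ i j, i ≠ j → β i ≤ β j → u i j = 0) →
      ∀ i j, ¬ β j < β i → (u - 1) i j = 0 := by
    intro u hd hz i j h
    rcases eq_or_ne i j with rfl | hij
    · simp [hd i]
    · rw [Matrix.sub_apply, hz i j hij (not_lt.mp h), Matrix.one_apply_ne hij, sub_zero]
  have hx₁ := hsl u₁ hd₁ hz₁
  have hx₂ := hsl u₂ hd₂ hz₂
  obtain ⟨y₂, hy₂, hvu, huv⟩ := iwahoriAux_unip_inv hβ hx₂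
  have hu₂ : (1 : Matrix (Fin n) (Fin n) R) + (u₂ - 1) = u₂ := by abel
  rw [hu₂] at hvu huv
  set v₂ := (1 : Matrix (Fin n) (Fin n) R) + y₂ with hv₂
  -- A := v₂ * u₁
  set A := v₂ * u₁ with hA
  have hAz : ∀ i j, ¬ β j < β i → (A - 1) i j = 0 := by
    have : A - 1 = y₂ + (u₁ - 1) + y₂ * (u₁ - 1) := by
      rw [hA, hv₂]
      have hu₁ : u₁ = 1 + (u₁ - 1) := by abel
      rw [hu₁]  -- careful: rewrites everywhere?
      noncomm_ring
    intro i j h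
    rw [this]
    rw [Matrix.add_apply, Matrix.add_apply, hy₂ i j h, hx₁ i j h,
      iwahoriAux_sl_mul hy₂ hx₁ i j h]
    simp
  have hAq : A * q₁ = q₂ := by
    rw [hA, Matrix.mul_assoc, heq, ← Matrix.mul_assoc, huv, Matrix.one_mul]
  have hq₁det : IsUnit q₁.det := (Matrix.isUnit_iff_isUnit_det q₁).mp hq₁
  have hAeq : A = q₂ * q₁⁻¹ := by
    rw [← hAq, Matrix.mul_assoc, Matrix.mul_nonsing_inv q₁ hq₁det, Matrix.mul_one]
  have hbt₁ : BlockTriangular q₁ β := fun i j h => ht₁ i j h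
  have hbt₂ : BlockTriangular q₂ β := fun i j h => ht₂ i j h
  haveI := hq₁.invertible
  have hbtinv : BlockTriangular q₁⁻¹ β := blockTriangular_inv_of_blockTriangular hbt₁
  have hAbt : BlockTriangular A β := hAeq ▸ hbt₂.mul hbtinv
  have hA1 : A = 1 := by
    have : A - 1 = 0 := by
      ext i j
      by_cases h : β j < β i
      · have h1 : A i j = 0 := hAbt h
        have h2 : (1 : Matrix (Fin n) (Fin n) R) i j = 0 :=
          Matrix.one_apply_ne (by intro hij; subst hij; exact absurd h (lt_irrefl _))
        simp [Matrix.sub_apply, h1, h2]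
      · simp [hAz i j h]
    have := sub_eq_zero.mp this
    exact this
  have hu : u₁ = u₂ := by
    have : u₂ * A = u₁ := by rw [hA, ← Matrix.mul_assoc, hvu, Matrix.one_mul]
    rw [← this, hA1, Matrix.mul_one]
  have hq : q₁ = q₂ := by rw [← hAq, hA1, Matrix.one_mul]
  rw [hu, hq]

end StrictLower

lemma iwahori_exists {R : Type*} [CommRing R] [IsLocalRing R] :
    ∀ (r n : ℕ) (β : Fin n → Fin r), Monotone β →
      ∀ g : Matrix (Fin n) (Fin n) R, IsUnit g →
      (∀ i j, β j < β i → g i j ∈ maximalIdeal R) →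
      ∃ u q : Matrix (Fin n) (Fin n) R,
        (∀ i, u i i = 1) ∧ (∀ i j, i ≠ j → β i ≤ β j → u i j = 0) ∧
        (∀ i j, β j < β i → u i j ∈ maximalIdeal R) ∧
        IsUnit q ∧ (∀ i j, β j < β i → q i j = 0) ∧ g = u * q := by
  intro r
  induction r with
  | zero =>
    intro n β hβ g hg hgm
    cases n with
    | zero =>
      refine ⟨1, g, fun i => i.elim0, fun i => i.elim0, fun i => i.elim0, hg,
        fun i => i.elim0, (Matrix.one_mul g).symm⟩
    | succ n => exact (β 0).elim0
  | succ r IH =>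
    intro n β hβ g hg hgm
    by_cases hlast : ∀ i, β i < Fin.last r
    · -- all blocks below the last one: reindex into Fin r
      set β' : Fin n → Fin r := fun i => (β i).castLT (hlast i) with hβ'
      have hlt : ∀ i j : Fin n, β' i < β' j ↔ β i < β j := fun i j => Iff.rfl
      have hle : ∀ i j : Fin n, β' i ≤ β' j ↔ β i ≤ β j := fun i j => Iff.rfl
      have hβ'mono : Monotone β' := fun i j hij => (hle i j).mpr (hβ hij)
      obtain ⟨u, q, h1, h2, h3, h4, h5, h6⟩ :=
        IH n β' hβ'mono g hg (fun i j h => hgm i j ((hlt j i).mp h))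
      exact ⟨u, q, h1, fun i j hij h => h2 i j hij ((hle i j).mpr h),
        fun i j h => h3 i j ((hlt j i).mpr h), h4,
        fun i j h => h5 i j ((hlt j i).mpr h), h6⟩
    · push_neg at hlast
      obtain ⟨i0, hi0⟩ := hlast
      have hi0' : β i0 = Fin.last r := le_antisymm (Fin.le_last _) hi0
      set T := Finset.univ.filter (fun i => β i = Fin.last r) with hT
      have hTne : T.Nonempty := ⟨i0, by simp [hT, hi0']⟩
      set i₁ := T.min' hTne with hi₁
      have hmem : β i₁ = Fin.last r := (Finset.mem_filter.mp (T.min'_mem hTne)).2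
      have hkey : ∀ i : Fin n, β i = Fin.last r ↔ i₁ ≤ i := by
        intro i
        constructor
        · intro h; exact T.min'_le i (by simp [hT, h])
        · intro h; exact le_antisymm (Fin.le_last _) (hmem ▸ hβ h)
      have hkey' : ∀ i : Fin n, β i < Fin.last r ↔ (i : ℕ) < (i₁ : ℕ) := by
        intro i
        constructor
        · intro h
          by_contra hc
          push_neg at hc
          exact absurd ((hkey i).mpr (Fin.le_def.mpr hc)) h.ne
        · intro h
          rcases (Fin.le_last (β i)).lt_or_eq with h' | h'
          · exact h'
          · have := Fin.le_def.mp ((hkey i).mp h')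
            omega
      set n₀ := (i₁ : ℕ) with hn₀def
      have hn₀ : n₀ < n := i₁.isLt
      -- the splitting equivalence
      set f : Fin n₀ → Fin n := fun a => ⟨a, lt_trans a.isLt hn₀⟩ with hf
      set f₂ : Fin (n - n₀) → Fin n := fun b => ⟨n₀ + b, by have := b.isLt; omega⟩ with hf₂
      set e : Fin n ≃ (Fin n₀ ⊕ Fin (n - n₀)) :=
        { toFun := fun i => if h : (i : ℕ) < n₀ then Sum.inl ⟨i, h⟩
            else Sum.inr ⟨(i : ℕ) - n₀, by have := i.isLt; omega⟩
          invFun := Sum.elim f f₂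
          left_inv := by
            intro i
            by_cases h : (i : ℕ) < n₀
            · simp [h, hf]
            · simp only [h, dite_false]
              apply Fin.ext
              simp [hf₂]
              omega
          right_inv := by
            rintro (a | b)
            · simp [hf, a.isLt]
            · have hb : ¬ ((n₀ + (b : ℕ)) < n₀) := by omega
              simp only [hf₂, Sum.elim_inr, hb, dite_false]
              congr 1
              apply Fin.ext
              simp } with he
      have hβf : ∀ a : Fin n₀, β (f a) < Fin.last r := fun a => (hkey' _).mpr a.isLt
      have hβf₂ : ∀ b : Fin (n - n₀), β (f₂ b) = Fin.last r := by
        intro b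
        rw [hkey]
        rw [Fin.le_def]
        simp [hf₂, hn₀def]
      have hinv : ∀ (i : Fin n) (a : Fin n₀), e i = Sum.inl a → f a = i := by
        intro i a h
        have := e.symm_apply_apply i
        rw [h] at this
        exact this
      have hinv₂ : ∀ (i : Fin n) (b : Fin (n - n₀)), e i = Sum.inr b → f₂ b = i := by
        intro i b h
        have := e.symm_apply_apply i
        rw [h] at this
        exact this
      -- the reindexed matrix and its blocks
      obtain ⟨M, hMdef⟩ : ∃ M', M' = g.submatrix e.symm e.symm := ⟨_, rfl⟩
      have hMapp : ∀ x y, M x y = g (e.symm x) (e.symm y) := by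
        intro x y; rw [hMdef]; rfl
      have hM : IsUnit M := by
        have h := hg.map (Matrix.reindexAlgEquiv R R e)
        rw [Matrix.reindexAlgEquiv_apply, Matrix.reindex_apply] at h
        rw [hMdef]; exact h
      obtain ⟨A, hAapp⟩ : ∃ A' : Matrix (Fin n₀) (Fin n₀) R,
          ∀ a b, A' a b = g (f a) (f b) := ⟨Matrix.of fun a b => g (f a) (f b), fun a b => rfl⟩
      obtain ⟨B, hBapp⟩ : ∃ B' : Matrix (Fin n₀) (Fin (n - n₀)) R,
          ∀ a b, B' a b = g (f a) (f₂ b) := ⟨Matrix.of fun a b => g (f a) (f₂ b), fun a b => rfl⟩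
      obtain ⟨C, hCapp⟩ : ∃ C' : Matrix (Fin (n - n₀)) (Fin n₀) R,
          ∀ a b, C' a b = g (f₂ a) (f b) := ⟨Matrix.of fun a b => g (f₂ a) (f b), fun a b => rfl⟩
      obtain ⟨D, hDapp⟩ : ∃ D' : Matrix (Fin (n - n₀)) (Fin (n - n₀)) R,
          ∀ a b, D' a b = g (f₂ a) (f₂ b) :=
        ⟨Matrix.of fun a b => g (f₂ a) (f₂ b), fun a b => rfl⟩
      have hesymm1 : ∀ a : Fin n₀, e.symm (Sum.inl a) = f a := fun a => rfl
      have hesymm2 : ∀ b : Fin (n - n₀), e.symm (Sum.inr b) = f₂ b := fun b => rfl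
      have hMblocks : M = fromBlocks A B C D := by
        ext x y
        rcases x with a | b <;> rcases y with c | d <;>
          simp only [hMapp, fromBlocks_apply₁₁, fromBlocks_apply₁₂, fromBlocks_apply₂₁,
            fromBlocks_apply₂₂, hesymm1, hesymm2, hAapp, hBapp, hCapp, hDapp]
      have hCm : ∀ a b, C a b ∈ maximalIdeal R := by
        intro a b
        rw [hCapp]
        exact hgm _ _ (by rw [hβf₂ a]; exact hβf b)
      -- invertibility of A via the residue field
      have hMmap : IsUnit (M.map (residue R)) := by
        have := hM.map (RingHom.mapMatrix (residue R))
        rwa [RingHom.mapMatrix_apply] at this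
      have hCmap : C.map (residue R) = 0 := by
        ext a b
        simp only [Matrix.map_apply, Matrix.zero_apply]
        exact Ideal.Quotient.eq_zero_iff_mem.mpr (hCm a b)
      have hMmapblocks : M.map (residue R) =
          fromBlocks (A.map (residue R)) (B.map (residue R)) 0 (D.map (residue R)) := by
        rw [hMblocks, fromBlocks_map, hCmap]
      have hdetprod : IsUnit ((A.map (residue R)).det * (D.map (residue R)).det) := by
        rw [← det_fromBlocks_zero₂₁, ← hMmapblocks]
        exact (Matrix.isUnit_iff_isUnit_det _).mp hMmap
      have hAdetres : (residue R) A.det ≠ 0 := by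
        have h1 := isUnit_of_mul_isUnit_left hdetprod
        rw [show A.map ⇑(residue R) = (residue R).mapMatrix A from
          (RingHom.mapMatrix_apply _ _).symm, ← RingHom.map_det] at h1
        exact h1.ne_zero
      have hAdet : IsUnit A.det := by
        by_contra h
        exact hAdetres (Ideal.Quotient.eq_zero_iff_mem.mpr
          ((mem_maximalIdeal _).mpr h))
      -- Schur complement
      obtain ⟨X, hXdef⟩ : ∃ X', X' = C * A⁻¹ := ⟨_, rfl⟩
      have hX : ∀ a b, X a b ∈ maximalIdeal R := by
        intro a b
        rw [hXdef, Matrix.mul_apply]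
        exact Ideal.sum_mem _ (fun c _ => Ideal.mul_mem_right _ _ (hCm a c))
      obtain ⟨D', hD'def⟩ : ∃ Z, Z = D - X * B := ⟨_, rfl⟩
      -- apply the induction hypothesis to A
      obtain ⟨βA, hβA⟩ : ∃ βA : Fin n₀ → Fin r, ∀ a, (βA a : ℕ) = (β (f a) : ℕ) :=
        ⟨fun a => ⟨(β (f a) : ℕ), by
          have h := hβf a; rw [Fin.lt_def, Fin.val_last] at h; exact h⟩, fun a => rfl⟩
      have hβAlt : ∀ a b : Fin n₀, βA a < βA b ↔ β (f a) < β (f b) := by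
        intro a b; rw [Fin.lt_def, Fin.lt_def, hβA, hβA]
      have hβAle : ∀ a b : Fin n₀, βA a ≤ βA b ↔ β (f a) ≤ β (f b) := by
        intro a b; rw [Fin.le_def, Fin.le_def, hβA, hβA]
      have hβAmono : Monotone βA := by
        intro a b hab
        rw [hβAle]
        exact hβ (by rw [Fin.le_def]; simpa [hf] using hab)
      have hAunit : IsUnit A := (Matrix.isUnit_iff_isUnit_det A).mpr hAdet
      have hAm : ∀ a b, βA b < βA a → A a b ∈ maximalIdeal R := by
        intro a b h
        rw [hAapp]
        exact hgm _ _ ((hβAlt b a).mp h)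
      obtain ⟨uA, qA, huAd, huAz, huAm, hqA, hqAz, hAeq⟩ := IH n₀ βA hβAmono A hAunit hAm
      have huAdet : IsUnit uA.det := by
        have h1 : IsUnit (uA * qA).det := by rw [← hAeq]; exact hAdet
        rw [Matrix.det_mul] at h1
        exact isUnit_of_mul_isUnit_left h1
      obtain ⟨B', hB'def⟩ : ∃ Z, Z = uA⁻¹ * B := ⟨_, rfl⟩
      have huB : uA * B' = B := by
        rw [hB'def, ← Matrix.mul_assoc, Matrix.mul_nonsing_inv _ huAdet, Matrix.one_mul]
      -- assemble the factorization over the sum type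
      obtain ⟨U₀, hU₀def⟩ : ∃ Z : Matrix (Fin n₀ ⊕ Fin (n - n₀)) (Fin n₀ ⊕ Fin (n - n₀)) R,
        Z = fromBlocks uA 0 (X * uA) 1 := ⟨_, rfl⟩
      obtain ⟨Q₀, hQ₀def⟩ : ∃ Z : Matrix (Fin n₀ ⊕ Fin (n - n₀)) (Fin n₀ ⊕ Fin (n - n₀)) R,
        Z = fromBlocks qA B' 0 D' := ⟨_, rfl⟩
      have e21 : X * uA * qA = C := by
        rw [Matrix.mul_assoc, ← hAeq, hXdef, Matrix.mul_assoc,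
          Matrix.nonsing_inv_mul _ hAdet, Matrix.mul_one]
      have e22 : X * uA * B' + D' = D := by
        rw [Matrix.mul_assoc, huB, hD'def]
        abel
      have hUQ : U₀ * Q₀ = M := by
        rw [hU₀def, hQ₀def, fromBlocks_multiply, hMblocks]
        simp only [Matrix.zero_mul, Matrix.mul_zero, Matrix.one_mul, add_zero, zero_add]
        rw [← hAeq, huB, e21, e22]
      have hU₀det : IsUnit U₀.det := by
        rw [hU₀def, det_fromBlocks_zero₁₂, Matrix.det_one, mul_one]
        exact huAdet
      have hQ₀ : IsUnit Q₀ := by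
        have hQeq : Q₀ = U₀⁻¹ * M := by
          rw [← hUQ, ← Matrix.mul_assoc, Matrix.nonsing_inv_mul _ hU₀det, Matrix.one_mul]
        rw [hQeq]
        exact ((Matrix.isUnit_iff_isUnit_det _).mpr
          (Matrix.isUnit_nonsing_inv_det_iff.mpr hU₀det)).mul hM
      -- transport back
      refine ⟨U₀.submatrix e e, Q₀.submatrix e e, ?_, ?_, ?_, ?_, ?_, ?_⟩
      · -- diagonal ones
        intro i
        rw [Matrix.submatrix_apply]
        rcases h : e i with a | b <;> try rw [h]
        · simp only [hU₀def, fromBlocks_apply₁₁]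
          exact huAd a
        · simp [hU₀def]
      · -- zero above/within blocks
        intro i j hij hle
        rw [Matrix.submatrix_apply]
        rcases h1 : e i with a | b <;> rcases h2 : e j with c | d <;> try rw [h1, h2]
        · have hia := hinv i a h1
          have hjc := hinv j c h2
          simp only [hU₀def, fromBlocks_apply₁₁]
          refine huAz a c ?_ ?_
          · intro hac; apply hij; rw [← hia, ← hjc, hac]
          · rw [hβAle, hia, hjc]; exact hle
        · simp [hU₀def]
        · exfalso
          have hib := hinv₂ i b h1
          have hjc := hinv j c h2
          have h3 : β i = Fin.last r := by rw [← hib]; exact hβf₂ b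
          have h4 : β j < Fin.last r := by rw [← hjc]; exact hβf c
          rw [h3] at hle
          exact absurd (lt_of_le_of_lt hle h4) (lt_irrefl _)
        · have hib := hinv₂ i b h1
          have hjd := hinv₂ j d h2
          simp only [hU₀def, fromBlocks_apply₂₂]
          refine Matrix.one_apply_ne ?_
          intro hbd; apply hij; rw [← hib, ← hjd, hbd]
      · -- membership in the maximal ideal
        intro i j hlt
        rw [Matrix.submatrix_apply]
        rcases h1 : e i with a | b <;> rcases h2 : e j with c | d <;> try rw [h1, h2]
        · have hia := hinv i a h1
          have hjc := hinv j c h2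
          simp only [hU₀def, fromBlocks_apply₁₁]
          exact huAm a c (by rw [hβAlt, hia, hjc]; exact hlt)
        · simp only [hU₀def, fromBlocks_apply₁₂, Matrix.zero_apply]
          exact Submodule.zero_mem _
        · simp only [hU₀def, fromBlocks_apply₂₁]
          rw [Matrix.mul_apply]
          exact Ideal.sum_mem _ (fun k _ => Ideal.mul_mem_right _ _ (hX b k))
        · exfalso
          have hib := hinv₂ i b h1
          have hjd := hinv₂ j d h2
          have h3 : β i = Fin.last r := by rw [← hib]; exact hβf₂ b
          have h4 : β j = Fin.last r := by rw [← hjd]; exact hβf₂ d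
          rw [h3, h4] at hlt
          exact absurd hlt (lt_irrefl _)
      · -- q invertible
        have := hQ₀.map (Matrix.reindexAlgEquiv R R e.symm)
        rwa [Matrix.reindexAlgEquiv_apply, Matrix.reindex_apply, Equiv.symm_symm] at this
      · -- q block upper triangular
        intro i j hlt
        rw [Matrix.submatrix_apply]
        rcases h1 : e i with a | b <;> rcases h2 : e j with c | d <;> try rw [h1, h2]
        · have hia := hinv i a h1
          have hjc := hinv j c h2
          simp only [hQ₀def, fromBlocks_apply₁₁]
          exact hqAz a c (by rw [hβAlt, hia, hjc]; exact hlt)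
        · exfalso
          have hia := hinv i a h1
          have hjd := hinv₂ j d h2
          have h3 : β i < Fin.last r := by rw [← hia]; exact hβf a
          have h4 : β j = Fin.last r := by rw [← hjd]; exact hβf₂ d
          rw [h4] at hlt
          exact absurd (lt_trans hlt h3) (lt_irrefl _)
        · simp [hQ₀def]
        · exfalso
          have hib := hinv₂ i b h1
          have hjd := hinv₂ j d h2
          have h3 : β i = Fin.last r := by rw [← hib]; exact hβf₂ b
          have h4 : β j = Fin.last r := by rw [← hjd]; exact hβf₂ d
          rw [h3, h4] at hlt
          exact absurd hlt (lt_irrefl _)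
      · -- the factorization
        rw [Matrix.submatrix_mul_equiv, hUQ, hMdef, Matrix.submatrix_submatrix,
          Equiv.symm_comp_self, Matrix.submatrix_id_id]

/-- Iwahori-type factorization for `GL_n` over a commutative local ring `R`:
given a block structure `β : Fin n → Fin r` (monotone), every invertible matrix `g`
whose entries below the block diagonal lie in the maximal ideal `m` factors uniquely
as `g = u * q`, where `u` is block lower triangular unipotent with sub-diagonal
entries in `m` (and zero off-diagonal entries elsewhere), and `q` is an invertible
block upper triangular matrix. -/
theorem iwahori_factorization {R : Type*} [CommRing R] [IsLocalRing R]
    (n r : ℕ) (hn : 1 ≤ n) (hr : 1 ≤ r)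
    (β : Fin n → Fin r) (hβ : Monotone β)
    (g : Matrix (Fin n) (Fin n) R) (hg : IsUnit g)
    (hgm : ∀ i j, β j < β i → g i j ∈ IsLocalRing.maximalIdeal R) :
    ∃! uq : Matrix (Fin n) (Fin n) R × Matrix (Fin n) (Fin n) R,
      (∀ i, uq.1 i i = 1) ∧
      (∀ i j, i ≠ j → β i ≤ β j → uq.1 i j = 0) ∧
      (∀ i j, β j < β i → uq.1 i j ∈ IsLocalRing.maximalIdeal R) ∧
      IsUnit uq.2 ∧
      (∀ i j, β j < β i → uq.2 i j = 0) ∧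
      g = uq.1 * uq.2 := by
  obtain ⟨u, q, h1, h2, h3, h4, h5, h6⟩ := iwahori_exists r n β hβ g hg hgm
  refine ⟨(u, q), ⟨h1, h2, h3, h4, h5, h6⟩, ?_⟩
  rintro ⟨u', q'⟩ ⟨h1', h2', h3', h4', h5', h6'⟩
  exact iwahori_unique hβ h1' h2' h4' h5' h1 h2 h4 h5 (h6'.symm.trans h6)
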